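/- With ι(α·δ + γ) = ν + κ_α·δ + κ_γ and φ(ν + κ_α·δ + χ) = α·δ + index(χ) as above, φ extends ι⁻¹: for every λ in the domain of ι, φ(ι(λ)) = λ. Moreover ι(λ) is the least σ with φ(σ) = λ. -/

import Mathlib

open Ordinal

/-- φ extends ι⁻¹: for every λ in the domain of ι, φ(ι(λ)) = λ; moreover ι(λ)
is the least σ (of the form ν + κ_α·δ + χ, χ < κ_α) with φ(σ) = λ. -/
theorem stmt7 (κ : Ordinal → Ordinal) (α ν lamMax : Ordinal)
    (index : Ordinal → Ordinal) (ι φ : Ordinal → Ordinal)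
    (hκ : Order.IsNormal κ) (h0 : κ 0 = 0)
    (heps : (omega0 : Ordinal) ^ α = α)
    (hν : ∃ ξ, ν = κ α * ξ)
    (hidx0 : index 0 = 0)
    (hidx : ∀ χ : Ordinal, 0 < χ → χ < κ α →
      index χ < α ∧ κ (index χ) ≤ χ ∧ χ < κ (index χ + 1))
    (hι : ∀ δ γ : Ordinal, γ < α → α * δ + γ ≤ lamMax →
      ι (α * δ + γ) = ν + κ α * δ + κ γ)
    (hφ : ∀ δ χ : Ordinal, χ < κ α → φ (ν + κ α * δ + χ) = α * δ + index χ) :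
    ∀ l ≤ lamMax, φ (ι l) = l ∧
      ∀ σ : Ordinal, (∃ δ χ, χ < κ α ∧ σ = ν + κ α * δ + χ) → φ σ = l →
        ι l ≤ σ := by
  intro l hl
  have hα0 : α ≠ 0 := by
    intro h; rw [h, opow_zero] at heps; simp at heps
  have hsm := hκ.strictMono
  -- decompose l
  set δ := l / α with hδ
  set γ := l % α with hγ
  have hγα : γ < α := mod_lt l hα0
  have hdec : α * δ + γ = l := div_add_mod l α
  have hκγ : κ γ < κ α := hsm hγα
  have hιl : ι l = ν + κ α * δ + κ γ := by
    rw [← hdec]; exact hι δ γ hγα (hdec ▸ hl)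
  -- index (κ γ) = γ
  have hidxκ : index (κ γ) = γ := by
    rcases eq_or_ne γ 0 with h | h
    · rw [h, h0, hidx0]
    · have hγpos : 0 < κ γ := by
        have := hsm (pos_iff_ne_zero.2 h); rwa [h0] at this
      obtain ⟨_, h1, h2⟩ := hidx (κ γ) hγpos hκγ
      have l1 : index (κ γ) ≤ γ := hsm.le_iff_le.1 h1
      have l2 : γ < index (κ γ) + 1 := hsm.lt_iff_lt.1 h2
      exact le_antisymm l1 (Order.lt_add_one_iff.1 l2)
  have hφι : φ (ι l) = l := by
    rw [hιl, hφ δ (κ γ) hκγ, hidxκ, hdec]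
  refine ⟨hφι, ?_⟩
  rintro σ ⟨δ', χ, hχ, rfl⟩ hφσ
  rw [hφ δ' χ hχ] at hφσ
  have hiχ : index χ < α := by
    rcases eq_or_ne χ 0 with h | h
    · rw [h, hidx0]; exact pos_iff_ne_zero.2 hα0
    · exact (hidx χ (pos_iff_ne_zero.2 h) hχ).1
  -- uniqueness of division
  have hδ' : δ' = δ := by
    have : (α * δ' + index χ) / α = (α * δ + γ) / α := by rw [hφσ, hdec]
    rwa [mul_add_div _ hα0, mul_add_div _ hα0, div_eq_zero_of_lt hiχ,
      div_eq_zero_of_lt hγα, add_zero, add_zero] at this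
  have hγ' : index χ = γ := by
    rw [hδ'] at hφσ; rw [← hdec] at hφσ
    exact add_left_cancel hφσ
  have hκγχ : κ γ ≤ χ := by
    rcases eq_or_ne χ 0 with h | h
    · rw [h]; rw [h, hidx0] at hγ'; rw [← hγ', h0]
    · have := (hidx χ (pos_iff_ne_zero.2 h) hχ).2.1
      rwa [hγ'] at this
  rw [hιl, hδ']
  exact add_le_add_right hκγχ _
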